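/- There exists a unique sequence of pairs of reals (R_k, θ_k), k ∈ ℕ, with R_0 = 1, θ_0 = 0, θ_1 = 1/2, R_1 = 0, such that the formal power series R(Z) = Σ_k R_k Z^(-k), θ(Z) = Σ_k θ_k Z^(-k) formally satisfy dR/dZ = -tan θ + R/(2Z) and dθ/dZ = (n-1)(1/cos θ - 1/R) (with tan and cos replaced by their Taylor series), where at each order k, θ_k is determined by the first equation from lower-order coefficients and R_k by the second. -/

import Mathlib

open Real Filter

/-- `c` is a formal solution of the system, in the sense that for every `k` the
truncation at order `k` of the series `R(Z) = Σ R_j Z^(-j)`, `θ(Z) = Σ θ_j Z^(-j)`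
satisfies both equations of the system up to `o(Z^(-k))` as `Z → ∞`. -/
def IsFormalSolution (n : ℕ) (c : ℕ → ℝ × ℝ) : Prop :=
  ∀ k : ℕ,
    ((fun Z : ℝ => (∑ j ∈ Finset.range (k + 1), -(j : ℝ) * (c j).1 * Z ^ (-(j : ℤ) - 1))
        - (-Real.tan (∑ j ∈ Finset.range (k + 1), (c j).2 * Z ^ (-(j : ℤ)))
            + (∑ j ∈ Finset.range (k + 1), (c j).1 * Z ^ (-(j : ℤ))) / (2 * Z)))
      =o[atTop] fun Z : ℝ => Z ^ (-(k : ℤ))) ∧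
    ((fun Z : ℝ => (∑ j ∈ Finset.range (k + 1), -(j : ℝ) * (c j).2 * Z ^ (-(j : ℤ) - 1))
        - ((n : ℝ) - 1) * (1 / Real.cos (∑ j ∈ Finset.range (k + 1), (c j).2 * Z ^ (-(j : ℤ)))
            - 1 / (∑ j ∈ Finset.range (k + 1), (c j).1 * Z ^ (-(j : ℤ)))))
      =o[atTop] fun Z : ℝ => Z ^ (-(k : ℤ)))

open Asymptotics Topology

noncomputable section



namespace FS

lemma analyticAt_rsin (x : ℝ) : AnalyticAt ℝ Real.sin x := by
  have h : AnalyticAt ℝ (fun y : ℝ => (Complex.sin (y : ℂ)).re) x :=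
    (Complex.reCLM.analyticAt _).comp
      (((Complex.differentiable_sin.analyticAt (x : ℂ)).restrictScalars).comp
        (Complex.ofRealCLM.analyticAt x))
  refine h.congr ?_
  filter_upwards with y
  exact Complex.sin_ofReal_re y

lemma analyticAt_rcos (x : ℝ) : AnalyticAt ℝ Real.cos x := by
  have h : AnalyticAt ℝ (fun y : ℝ => (Complex.cos (y : ℂ)).re) x :=
    (Complex.reCLM.analyticAt _).comp
      (((Complex.differentiable_cos.analyticAt (x : ℂ)).restrictScalars).comp
        (Complex.ofRealCLM.analyticAt x))
  refine h.congr ?_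
  filter_upwards with y
  exact Complex.cos_ofReal_re y

lemma analyticAt_rtan {x : ℝ} (hx : Real.cos x ≠ 0) : AnalyticAt ℝ Real.tan x := by
  have h := (analyticAt_rsin x).div (analyticAt_rcos x) hx
  refine h.congr ?_
  filter_upwards with y
  exact (Real.tan_eq_sin_div_cos y).symm

/-- transfer between `atTop` and `𝓝[>] 0` via `Z ↦ Z⁻¹`. -/
lemma transfer (F : ℝ → ℝ) (k : ℕ) :
    ((fun Z : ℝ => F Z⁻¹) =o[atTop] fun Z : ℝ => Z ^ (-(k : ℤ))) ↔
      F =o[𝓝[>] (0 : ℝ)] fun t => t ^ k := by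
  have hzpow : ∀ Z : ℝ, Z ^ (-(k : ℤ)) = (Z⁻¹) ^ k := by
    intro Z; rw [zpow_neg, zpow_natCast, inv_pow]
  constructor
  · intro h
    have h2 := h.comp_tendsto tendsto_inv_nhdsGT_zero
    refine (h2.congr' ?_ ?_)
    · filter_upwards [self_mem_nhdsWithin] with t ht
      simp only [Function.comp_apply, inv_inv]
    · filter_upwards [self_mem_nhdsWithin] with t ht
      simp only [Function.comp_apply, hzpow, inv_inv]
  · intro h
    have h2 := h.comp_tendsto (tendsto_inv_atTop_nhdsGT_zero (𝕜 := ℝ))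
    refine h2.congr' (by rfl) ?_
    filter_upwards with Z
    rw [hzpow]; rfl

lemma const_mul_pow_zero {b : ℝ} {k : ℕ}
    (h : (fun t : ℝ => b * t ^ k) =o[𝓝[>] (0 : ℝ)] fun t => t ^ k) : b = 0 := by
  by_contra hb
  have hε : (0 : ℝ) < |b| / 2 := by positivity
  have h2 := (isLittleO_iff.mp h) hε
  obtain ⟨t, ht, ht0⟩ := (h2.and self_mem_nhdsWithin).exists
  have htpow : (0 : ℝ) < t ^ k := pow_pos ht0 k
  rw [Real.norm_eq_abs, Real.norm_eq_abs, abs_mul, abs_of_pos htpow] at ht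
  nlinarith [abs_pos.mpr hb]

/-- `C * t^(k+1) = o(t^k)` near 0. -/
lemma pow_succ_littleO (k : ℕ) (C : ℝ) :
    (fun t : ℝ => C * t ^ (k + 1)) =o[𝓝[>] (0 : ℝ)] fun t => t ^ k :=
  (((isLittleO_pow_pow (Nat.lt_succ_self k)).const_mul_left C).mono nhdsWithin_le_nhds)

lemma pow_is_bigO_pow_succ (k : ℕ) {m : ℕ} (h : k ≤ m) :
    (fun t : ℝ => t ^ m) =O[𝓝[>] (0 : ℝ)] fun t : ℝ => t ^ k := by
  rcases Nat.exists_eq_add_of_le h with ⟨d, rfl⟩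
  induction d with
  | zero => simpa using isBigO_refl _ _
  | succ d ih =>
      have : (fun t : ℝ => t ^ (k + (d+1))) =o[𝓝[>] (0:ℝ)] fun t => t ^ (k + d) := by
        exact (isLittleO_pow_pow (Nat.lt_succ_self _)).mono nhdsWithin_le_nhds
      exact this.isBigO.trans (ih (Nat.le_add_right _ _))

end FS
namespace FS

/-- strict derivative perturbation lemma -/
lemma strict_pert {f : ℝ → ℝ} {d x : ℝ} (hf : HasStrictDerivAt f d x)
    {l : Filter ℝ} {u w g : ℝ → ℝ} (hu : Tendsto u l (𝓝 x)) (hw : Tendsto w l (𝓝 x))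
    (hg : (fun t => u t - w t) =O[l] g) :
    (fun t => f (u t) - f (w t) - d * (u t - w t)) =o[l] g := by
  have h1 := hf.isLittleO
  have h2 : Tendsto (fun t => (u t, w t)) l (𝓝 (x, x)) := by
    rw [nhds_prod_eq]; exact hu.prodMk hw
  have h3 := (h1.comp_tendsto h2).trans_isBigO hg
  refine h3.congr' ?_ (by rfl)
  filter_upwards with t
  simp only [Function.comp_apply, ContinuousLinearMap.toSpanSingleton_apply,
    ContinuousLinearMap.one_apply, smul_eq_mul]
  ring

/-- coefficients of a polynomial that is o(t^k) as t → 0⁺ vanish up to degree k -/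
lemma poly_coeff_zero : ∀ (m : ℕ) (b : ℕ → ℝ) (k : ℕ),
    ((fun t : ℝ => ∑ j ∈ Finset.range m, b j * t ^ j) =o[𝓝[>] (0 : ℝ)] fun t => t ^ k) →
    ∀ j, j ≤ k → j < m → b j = 0 := by
  intro m
  induction m with
  | zero => intro b k h j hjk hjm; omega
  | succ m ih =>
    intro b k h j hjk hjm
    -- first, b 0 = 0
    have hb0 : b 0 = 0 := by
      have hcont : Tendsto (fun t : ℝ => ∑ j ∈ Finset.range (m+1), b j * t ^ j)
          (𝓝[>] (0:ℝ)) (𝓝 (∑ j ∈ Finset.range (m+1), b j * (0:ℝ) ^ j)) := by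
        apply Tendsto.mono_left _ nhdsWithin_le_nhds
        exact (Continuous.tendsto
          (continuous_finset_sum _ fun i _ => continuous_const.mul (continuous_pow i)) 0)
      have hval : (∑ j ∈ Finset.range (m+1), b j * (0:ℝ) ^ j) = b 0 := by
        rw [Finset.sum_range_succ']
        simp
      rw [hval] at hcont
      have hO1 : (fun t : ℝ => t ^ k) =O[𝓝[>] (0:ℝ)] (fun _ : ℝ => (1:ℝ)) := by
        simpa using pow_is_bigO_pow_succ 0 (Nat.zero_le k)
      have h0 : Tendsto (fun t : ℝ => ∑ j ∈ Finset.range (m+1), b j * t ^ j)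
          (𝓝[>] (0:ℝ)) (𝓝 0) := by
        rw [← isLittleO_one_iff ℝ]
        exact h.trans_isBigO hO1
      exact tendsto_nhds_unique hcont h0
    rcases Nat.eq_zero_or_pos j with rfl | hj
    · exact hb0
    -- now j ≥ 1, hence k ≥ 1
    obtain ⟨k', rfl⟩ : ∃ k', k = k' + 1 := ⟨k - 1, by omega⟩
    -- factor: S t = b 0 + t * S' t
    have hfact : ∀ t : ℝ, (∑ j ∈ Finset.range (m+1), b j * t ^ j)
        = b 0 + t * ∑ j ∈ Finset.range m, b (j+1) * t ^ j := by
      intro t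
      rw [Finset.sum_range_succ', Finset.mul_sum]
      simp only [pow_succ, pow_zero, mul_one]
      rw [add_comm]
      congr 1
      apply Finset.sum_congr rfl
      intro i _
      ring
    have hS' : (fun t : ℝ => ∑ j ∈ Finset.range m, b (j+1) * t ^ j)
        =o[𝓝[>] (0:ℝ)] fun t => t ^ k' := by
      rw [isLittleO_iff] at h ⊢
      intro ε hε
      filter_upwards [h hε, self_mem_nhdsWithin] with t ht ht0
      have ht0' : (0:ℝ) < t := ht0
      have heq : ∑ j ∈ Finset.range (m+1), b j * t ^ j
          = t * ∑ j ∈ Finset.range m, b (j+1) * t ^ j := by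
        rw [hfact t, hb0, zero_add]
      rw [heq] at ht
      rw [Real.norm_eq_abs, Real.norm_eq_abs] at ht ⊢
      rw [abs_mul, abs_of_pos ht0'] at ht
      have hpow : |t ^ (k' + 1)| = t * |t ^ k'| := by
        rw [pow_succ, abs_mul, abs_of_pos ht0']; ring
      rw [hpow] at ht
      have ht2 : t * |∑ j ∈ Finset.range m, b (j+1) * t ^ j| ≤ t * (ε * |t ^ k'|) := by
        nlinarith
      exact le_of_mul_le_mul_left ht2 ht0'
    obtain ⟨j', rfl⟩ : ∃ j', j = j' + 1 := ⟨j - 1, by omega⟩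
    exact ih (fun i => b (i+1)) k' hS' j' (by omega) (by omega)

end FS
namespace FS

lemma exists_coeff {F : ℝ → ℝ} (hF : AnalyticAt ℝ F 0) (k : ℕ)
    (h : F =o[𝓝[>] (0 : ℝ)] fun t => t ^ k) :
    ∃ a : ℝ, (fun t => F t - a * t ^ (k + 1)) =o[𝓝[>] (0 : ℝ)] fun t => t ^ (k + 1) := by
  obtain ⟨p, hp⟩ := hF
  have hO := hp.isBigO_sub_partialSum_pow (k + 2)
  set b : ℕ → ℝ := fun j => p.coeff j with hb
  have hps : ∀ y : ℝ, p.partialSum (k + 2) y = ∑ j ∈ Finset.range (k + 2), b j * y ^ j := by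
    intro y
    unfold FormalMultilinearSeries.partialSum
    apply Finset.sum_congr rfl
    intro i _
    rw [p.apply_eq_pow_smul_coeff]
    simp [hb, mul_comm]
  have hO2 : (fun y : ℝ => F y - ∑ j ∈ Finset.range (k + 2), b j * y ^ j)
      =O[𝓝[>] (0:ℝ)] fun y : ℝ => y ^ (k + 2) := by
    have h' := hO.mono (nhdsWithin_le_nhds (s := Set.Ioi (0:ℝ)))
    refine h'.congr' ?_ ?_
    · filter_upwards with y; rw [zero_add, hps]
    · filter_upwards [self_mem_nhdsWithin] with y hy
      rw [Real.norm_eq_abs, abs_of_pos (hy : (0:ℝ) < y)]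
  have hlito : (fun y : ℝ => F y - ∑ j ∈ Finset.range (k + 2), b j * y ^ j)
      =o[𝓝[>] (0:ℝ)] fun y : ℝ => y ^ (k + 1) := by
    refine hO2.trans_isLittleO ?_
    exact (isLittleO_pow_pow (Nat.lt_succ_self (k+1))).mono nhdsWithin_le_nhds
  -- the polynomial part is o(t^k)
  have hpoly : (fun y : ℝ => ∑ j ∈ Finset.range (k + 2), b j * y ^ j)
      =o[𝓝[>] (0:ℝ)] fun y : ℝ => y ^ k := by
    have h1 : (fun y : ℝ => F y - (F y - ∑ j ∈ Finset.range (k + 2), b j * y ^ j))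
        =o[𝓝[>] (0:ℝ)] fun y : ℝ => y ^ k := by
      refine h.sub (hlito.trans_isBigO ?_)
      exact pow_is_bigO_pow_succ k (Nat.le_succ k)
    refine h1.congr' ?_ (by rfl)
    filter_upwards with y; ring
  have hvanish : ∀ j, j ≤ k → b j = 0 := fun j hj =>
    poly_coeff_zero (k + 2) b k hpoly j hj (by omega)
  refine ⟨b (k + 1), ?_⟩
  have hsum : ∀ y : ℝ, (∑ j ∈ Finset.range (k + 2), b j * y ^ j) = b (k+1) * y ^ (k+1) := by
    intro y
    rw [Finset.sum_range_succ]
    rw [Finset.sum_eq_zero, zero_add]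
    intro i hi
    have : i ≤ k := Nat.lt_succ_iff.mp (Finset.mem_range.mp hi)
    rw [hvanish i this, zero_mul]
  refine hlito.congr' ?_ (by rfl)
  filter_upwards with y
  rw [hsum]

end FS
namespace FS

def tp (c : ℕ → ℝ × ℝ) (k : ℕ) (t : ℝ) : ℝ := ∑ j ∈ Finset.range (k + 1), (c j).2 * t ^ j
def rp (c : ℕ → ℝ × ℝ) (k : ℕ) (t : ℝ) : ℝ := ∑ j ∈ Finset.range (k + 1), (c j).1 * t ^ j

def e1 (c : ℕ → ℝ × ℝ) (k : ℕ) (t : ℝ) : ℝ :=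
  (∑ j ∈ Finset.range (k + 1), -(j : ℝ) * (c j).1 * t ^ (j + 1))
    + Real.tan (tp c k t) - t * rp c k t / 2

def e2 (n : ℕ) (c : ℕ → ℝ × ℝ) (k : ℕ) (t : ℝ) : ℝ :=
  (∑ j ∈ Finset.range (k + 1), -(j : ℝ) * (c j).2 * t ^ (j + 1))
    - ((n : ℝ) - 1) * (1 / Real.cos (tp c k t) - 1 / rp c k t)

def Cond (n : ℕ) (c : ℕ → ℝ × ℝ) (k : ℕ) : Prop :=
  (e1 c k =o[𝓝[>] (0 : ℝ)] fun t => t ^ k) ∧ (e2 n c k =o[𝓝[>] (0 : ℝ)] fun t => t ^ k)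

lemma zpow_eq_inv_pow (Z : ℝ) (j : ℕ) : Z ^ (-(j : ℤ)) = (Z⁻¹) ^ j := by
  rw [zpow_neg, zpow_natCast, inv_pow]

lemma zpow_eq_inv_pow' (Z : ℝ) (j : ℕ) : Z ^ (-(j : ℤ) - 1) = (Z⁻¹) ^ (j + 1) := by
  have : -(j : ℤ) - 1 = -((j + 1 : ℕ) : ℤ) := by push_cast; ring
  rw [this, zpow_eq_inv_pow]

lemma isFormalSolution_iff (n : ℕ) (c : ℕ → ℝ × ℝ) :
    IsFormalSolution n c ↔ ∀ k, Cond n c k := by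
  unfold IsFormalSolution Cond
  apply forall_congr'
  intro k
  have h1 : (fun Z : ℝ => (∑ j ∈ Finset.range (k + 1), -(j : ℝ) * (c j).1 * Z ^ (-(j : ℤ) - 1))
        - (-Real.tan (∑ j ∈ Finset.range (k + 1), (c j).2 * Z ^ (-(j : ℤ)))
            + (∑ j ∈ Finset.range (k + 1), (c j).1 * Z ^ (-(j : ℤ))) / (2 * Z)))
      = fun Z : ℝ => e1 c k Z⁻¹ := by
    funext Z
    unfold e1 tp rp
    simp only [zpow_eq_inv_pow, zpow_eq_inv_pow']
    rw [div_eq_mul_inv _ (2 * Z), mul_inv]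
    ring
  have h2 : (fun Z : ℝ => (∑ j ∈ Finset.range (k + 1), -(j : ℝ) * (c j).2 * Z ^ (-(j : ℤ) - 1))
        - ((n : ℝ) - 1) * (1 / Real.cos (∑ j ∈ Finset.range (k + 1), (c j).2 * Z ^ (-(j : ℤ)))
            - 1 / (∑ j ∈ Finset.range (k + 1), (c j).1 * Z ^ (-(j : ℤ)))))
      = fun Z : ℝ => e2 n c k Z⁻¹ := by
    funext Z
    unfold e2 tp rp
    simp only [zpow_eq_inv_pow, zpow_eq_inv_pow']
  rw [h1, h2, transfer, transfer]

/-- value of a polynomial-type sum at 0 -/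
lemma sum_at_zero (k : ℕ) (a : ℕ → ℝ) :
    (∑ j ∈ Finset.range (k + 1), a j * (0:ℝ) ^ j) = a 0 := by
  rw [Finset.sum_range_succ']
  simp

lemma tp_tendsto {c : ℕ → ℝ × ℝ} {k : ℕ} :
    Tendsto (tp c k) (𝓝[>] (0:ℝ)) (𝓝 ((c 0).2)) := by
  have hcont : Continuous (tp c k) :=
    continuous_finset_sum _ fun i _ => continuous_const.mul (continuous_pow i)
  have := (hcont.tendsto 0).mono_left (nhdsWithin_le_nhds (s := Set.Ioi (0:ℝ)))
  rwa [show tp c k 0 = (c 0).2 from sum_at_zero k _] at this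

lemma rp_tendsto {c : ℕ → ℝ × ℝ} {k : ℕ} :
    Tendsto (rp c k) (𝓝[>] (0:ℝ)) (𝓝 ((c 0).1)) := by
  have hcont : Continuous (rp c k) :=
    continuous_finset_sum _ fun i _ => continuous_const.mul (continuous_pow i)
  have := (hcont.tendsto 0).mono_left (nhdsWithin_le_nhds (s := Set.Ioi (0:ℝ)))
  rwa [show rp c k 0 = (c 0).1 from sum_at_zero k _] at this

/-- congruence: the conditions only depend on coefficients up to `k` -/
lemma tp_congr {c c' : ℕ → ℝ × ℝ} {k : ℕ} (h : ∀ j ≤ k, c j = c' j) : tp c k = tp c' k := by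
  funext t; unfold tp
  exact Finset.sum_congr rfl fun j hj => by
    rw [h j (Nat.lt_succ_iff.mp (Finset.mem_range.mp hj))]

lemma rp_congr {c c' : ℕ → ℝ × ℝ} {k : ℕ} (h : ∀ j ≤ k, c j = c' j) : rp c k = rp c' k := by
  funext t; unfold rp
  exact Finset.sum_congr rfl fun j hj => by
    rw [h j (Nat.lt_succ_iff.mp (Finset.mem_range.mp hj))]

lemma e1_congr {c c' : ℕ → ℝ × ℝ} {k : ℕ} (h : ∀ j ≤ k, c j = c' j) : e1 c k = e1 c' k := by
  funext t; unfold e1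
  rw [tp_congr h, rp_congr h]
  have hs : (∑ j ∈ Finset.range (k + 1), -(j : ℝ) * (c j).1 * t ^ (j + 1))
      = ∑ j ∈ Finset.range (k + 1), -(j : ℝ) * (c' j).1 * t ^ (j + 1) :=
    Finset.sum_congr rfl fun j hj => by
      rw [h j (Nat.lt_succ_iff.mp (Finset.mem_range.mp hj))]
  rw [hs]

lemma e2_congr {n : ℕ} {c c' : ℕ → ℝ × ℝ} {k : ℕ} (h : ∀ j ≤ k, c j = c' j) :
    e2 n c k = e2 n c' k := by
  funext t; unfold e2
  rw [tp_congr h, rp_congr h]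
  have hs : (∑ j ∈ Finset.range (k + 1), -(j : ℝ) * (c j).2 * t ^ (j + 1))
      = ∑ j ∈ Finset.range (k + 1), -(j : ℝ) * (c' j).2 * t ^ (j + 1) :=
    Finset.sum_congr rfl fun j hj => by
      rw [h j (Nat.lt_succ_iff.mp (Finset.mem_range.mp hj))]
  rw [hs]

lemma cond_congr {n : ℕ} {c c' : ℕ → ℝ × ℝ} {k : ℕ} (h : ∀ j ≤ k, c j = c' j)
    (hc : Cond n c k) : Cond n c' k := by
  unfold Cond at hc ⊢
  rwa [e1_congr h, e2_congr h] at hc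

/-- analyticity of e1 and e2 at 0 -/
lemma tp_analytic {c : ℕ → ℝ × ℝ} {k : ℕ} : AnalyticAt ℝ (tp c k) 0 := by
  apply Finset.analyticAt_fun_sum
  intro i _
  exact analyticAt_const.mul ((analyticAt_id).pow i)

lemma rp_analytic {c : ℕ → ℝ × ℝ} {k : ℕ} : AnalyticAt ℝ (rp c k) 0 := by
  apply Finset.analyticAt_fun_sum
  intro i _
  exact analyticAt_const.mul ((analyticAt_id).pow i)

lemma e1_analytic {c : ℕ → ℝ × ℝ} {k : ℕ} (h0 : (c 0).2 = 0) : AnalyticAt ℝ (e1 c k) 0 := by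
  unfold e1
  apply AnalyticAt.sub
  apply AnalyticAt.add
  · apply Finset.analyticAt_fun_sum
    intro i _
    exact analyticAt_const.mul ((analyticAt_id).pow (i+1))
  · have hc0 : Real.cos (tp c k 0) ≠ 0 := by
      rw [show tp c k 0 = (c 0).2 from sum_at_zero k _, h0]
      simp
    exact (analyticAt_rtan hc0).comp tp_analytic
  · exact ((analyticAt_id).mul rp_analytic).div analyticAt_const (by norm_num)

lemma e2_analytic {n : ℕ} {c : ℕ → ℝ × ℝ} {k : ℕ} (h0 : (c 0).2 = 0) (h1 : (c 0).1 = 1) :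
    AnalyticAt ℝ (e2 n c k) 0 := by
  unfold e2
  apply AnalyticAt.sub
  · apply Finset.analyticAt_fun_sum
    intro i _
    exact analyticAt_const.mul ((analyticAt_id).pow (i+1))
  · apply analyticAt_const.mul
    apply AnalyticAt.sub
    · apply AnalyticAt.div analyticAt_const
      · exact (analyticAt_rcos (tp c k 0)).comp tp_analytic
      · rw [show tp c k 0 = (c 0).2 from sum_at_zero k _, h0]
        simp
    · apply AnalyticAt.div analyticAt_const rp_analytic
      rw [show rp c k 0 = (c 0).1 from sum_at_zero k _, h1]
      norm_num

end FS
namespace FS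

lemma sum_sub_single {k : ℕ} {a a' : ℕ → ℝ} (h : ∀ j < k, a j = a' j) (f : ℕ → ℝ → ℝ) (t : ℝ) :
    ((∑ j ∈ Finset.range (k + 1), a j * f j t) - ∑ j ∈ Finset.range (k + 1), a' j * f j t)
      = (a k - a' k) * f k t := by
  rw [← Finset.sum_sub_distrib]
  rw [Finset.sum_eq_single_of_mem k (Finset.self_mem_range_succ k)]
  · ring
  · intro j hj hjk
    have : j < k := by
      have := Finset.mem_range.mp hj; omega
    rw [h j this]; ring

lemma tp_sub {c c' : ℕ → ℝ × ℝ} {k : ℕ} (h : ∀ j < k, c j = c' j) (t : ℝ) :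
    tp c k t - tp c' k t = ((c k).2 - (c' k).2) * t ^ k := by
  unfold tp
  exact sum_sub_single (fun j hj => by rw [h j hj]) (fun j t => t ^ j) t

lemma rp_sub {c c' : ℕ → ℝ × ℝ} {k : ℕ} (h : ∀ j < k, c j = c' j) (t : ℝ) :
    rp c k t - rp c' k t = ((c k).1 - (c' k).1) * t ^ k := by
  unfold rp
  exact sum_sub_single (fun j hj => by rw [h j hj]) (fun j t => t ^ j) t

lemma d1_sub {c c' : ℕ → ℝ × ℝ} {k : ℕ} (h : ∀ j < k, c j = c' j) (t : ℝ) :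
    ((∑ j ∈ Finset.range (k + 1), -(j : ℝ) * (c j).1 * t ^ (j + 1))
      - ∑ j ∈ Finset.range (k + 1), -(j : ℝ) * (c' j).1 * t ^ (j + 1))
      = -(k : ℝ) * ((c k).1 - (c' k).1) * t ^ (k + 1) := by
  have := sum_sub_single (k := k) (a := fun j => -(j : ℝ) * (c j).1) (a' := fun j => -(j : ℝ) * (c' j).1)
    (fun j hj => by simp only [h j hj]) (fun j t => t ^ (j + 1)) t
  rw [this]; ring

lemma d2_sub {c c' : ℕ → ℝ × ℝ} {k : ℕ} (h : ∀ j < k, c j = c' j) (t : ℝ) :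
    ((∑ j ∈ Finset.range (k + 1), -(j : ℝ) * (c j).2 * t ^ (j + 1))
      - ∑ j ∈ Finset.range (k + 1), -(j : ℝ) * (c' j).2 * t ^ (j + 1))
      = -(k : ℝ) * ((c k).2 - (c' k).2) * t ^ (k + 1) := by
  have := sum_sub_single (k := k) (a := fun j => -(j : ℝ) * (c j).2) (a' := fun j => -(j : ℝ) * (c' j).2)
    (fun j hj => by simp only [h j hj]) (fun j t => t ^ (j + 1)) t
  rw [this]; ring

lemma step_unique {n : ℕ} (hn : 2 ≤ n) {c c' : ℕ → ℝ × ℝ} {k : ℕ} (hk : 1 ≤ k)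
    (h0 : c 0 = (1, 0)) (hlow : ∀ j < k, c j = c' j)
    (hc : Cond n c k) (hc' : Cond n c' k) : c k = c' k := by
  have h0' : c' 0 = (1, 0) := by rw [← hlow 0 hk]; exact h0
  have htc : Tendsto (tp c k) (𝓝[>] (0:ℝ)) (𝓝 0) := by
    have := tp_tendsto (c := c) (k := k); rwa [h0] at this
  have htc' : Tendsto (tp c' k) (𝓝[>] (0:ℝ)) (𝓝 0) := by
    have := tp_tendsto (c := c') (k := k); rwa [h0'] at this
  have hrc : Tendsto (rp c k) (𝓝[>] (0:ℝ)) (𝓝 1) := by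
    have := rp_tendsto (c := c) (k := k); rwa [h0] at this
  have hrc' : Tendsto (rp c' k) (𝓝[>] (0:ℝ)) (𝓝 1) := by
    have := rp_tendsto (c := c') (k := k); rwa [h0'] at this
  have hOθ : (fun t => tp c k t - tp c' k t) =O[𝓝[>] (0:ℝ)] fun t => t ^ k := by
    refine IsBigO.congr' (((isBigO_refl (fun t : ℝ => t ^ k) _).const_mul_left
      ((c k).2 - (c' k).2))) ?_ (by rfl)
    filter_upwards with t; rw [tp_sub hlow t]
  have hOρ : (fun t => rp c k t - rp c' k t) =O[𝓝[>] (0:ℝ)] fun t => t ^ k := by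
    refine IsBigO.congr' (((isBigO_refl (fun t : ℝ => t ^ k) _).const_mul_left
      ((c k).1 - (c' k).1))) ?_ (by rfl)
    filter_upwards with t; rw [rp_sub hlow t]
  -- step 1 : second components agree
  have hθ : (c k).2 = (c' k).2 := by
    have hA : (fun t => e1 c k t - e1 c' k t) =o[𝓝[>] (0:ℝ)] fun t => t ^ k := hc.1.sub hc'.1
    have hB := strict_pert (Real.hasStrictDerivAt_tan (x := 0) (by simp)) htc htc' hOθ
    norm_num [Real.cos_zero] at hB
    have hsmall1 := pow_succ_littleO k (-(k : ℝ) * ((c k).1 - (c' k).1))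
    have hsmall2 := pow_succ_littleO k (((c k).1 - (c' k).1) / 2)
    have hcomb := ((hA.sub hB).sub hsmall1).add hsmall2
    have key : (fun t : ℝ => ((c k).2 - (c' k).2) * t ^ k) =o[𝓝[>] (0:ℝ)] fun t => t ^ k := by
      refine hcomb.congr' ?_ (by rfl)
      filter_upwards with t
      have h1 := d1_sub hlow t
      have h2 := tp_sub hlow t
      have h3 := rp_sub hlow t
      simp only [e1]
      linear_combination h1 + h2 - t / 2 * h3
    have := const_mul_pow_zero key
    linarith [this]
  -- step 2 : first components agree
  have htpEq : tp c k = tp c' k := by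
    funext t
    have := tp_sub hlow t
    rw [hθ] at this
    simp at this
    linarith [this]
  have hρ : (c k).1 = (c' k).1 := by
    have hA : (fun t => e2 n c k t - e2 n c' k t) =o[𝓝[>] (0:ℝ)] fun t => t ^ k :=
      hc.2.sub hc'.2
    have hB := strict_pert (hasStrictDerivAt_inv (one_ne_zero (α := ℝ))) hrc hrc' hOρ
    norm_num at hB
    have hB' := hB.const_mul_left ((n : ℝ) - 1)
    have hsmall := pow_succ_littleO k (-(k : ℝ) * ((c k).2 - (c' k).2))
    have hcomb := (hA.sub hB').sub hsmall
    have key : (fun t : ℝ => (-(((n : ℝ) - 1) * ((c k).1 - (c' k).1))) * t ^ k)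
        =o[𝓝[>] (0:ℝ)] fun t => t ^ k := by
      refine hcomb.congr' ?_ (by rfl)
      filter_upwards with t
      have h1 := d2_sub hlow t
      have h3 := rp_sub hlow t
      simp only [e2, htpEq, one_div]
      linear_combination h1 - ((n : ℝ) - 1) * h3
    have hzero := const_mul_pow_zero key
    have hn1 : ((n : ℝ) - 1) ≠ 0 := by
      have : (2 : ℝ) ≤ (n : ℝ) := by exact_mod_cast hn
      linarith
    have := mul_eq_zero.mp (by linarith [hzero] : ((n : ℝ) - 1) * ((c k).1 - (c' k).1) = 0)
    rcases this with h | h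
    · exact absurd h hn1
    · linarith
  exact Prod.ext hρ hθ

end FS
namespace FS

lemma tendsto_c_pow (C : ℝ) (m : ℕ) (hm : 1 ≤ m) :
    Tendsto (fun t : ℝ => C * t ^ m) (𝓝[>] (0:ℝ)) (𝓝 0) := by
  have hcont : Continuous (fun t : ℝ => C * t ^ m) := continuous_const.mul (continuous_pow m)
  have h := (hcont.tendsto (0:ℝ)).mono_left (nhdsWithin_le_nhds (s := Set.Ioi (0:ℝ)))
  have : C * (0:ℝ) ^ m = 0 := by
    rw [zero_pow (by omega : m ≠ 0)]; ring
  rwa [this] at h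

lemma hasStrictDerivAt_sec : HasStrictDerivAt (fun x : ℝ => (Real.cos x)⁻¹) 0 0 := by
  have h := (hasStrictDerivAt_inv (by simp : Real.cos 0 ≠ 0)).comp 0 (Real.hasStrictDerivAt_cos 0)
  norm_num [Function.comp_def] at h
  exact h

def c0seq : ℕ → ℝ × ℝ := fun j => if j = 0 then (1, 0) else if j = 1 then (0, 1/2) else (0, 0)

lemma c0seq_0 : c0seq 0 = (1, 0) := rfl
lemma c0seq_1 : c0seq 1 = (0, 1/2) := rfl

lemma cond0 (n : ℕ) : Cond n c0seq 0 := by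
  constructor
  · have he : e1 c0seq 0 = fun t => -(t / 2) := by
      funext t
      simp [e1, tp, rp, c0seq, Finset.sum_range_one]
    rw [he]
    have h2 : (fun t : ℝ => t ^ (0:ℕ)) = fun _ : ℝ => (1:ℝ) := by funext t; simp
    rw [h2, isLittleO_one_iff]
    have := (continuous_id.neg.div_const 2).tendsto (0:ℝ)
    simp only [Pi.neg_apply, id, neg_zero, zero_div] at this
    have h3 := this.mono_left (nhdsWithin_le_nhds (s := Set.Ioi (0:ℝ)))
    refine h3.congr ?_
    intro t; ring
  · have he : e2 n c0seq 0 = fun _ => (0:ℝ) := by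
      funext t
      simp [e2, tp, rp, c0seq, Finset.sum_range_one]
    rw [he]
    exact isLittleO_zero _ _
lemma cond1 (n : ℕ) : Cond n c0seq 1 := by
  have htp1 : ∀ t : ℝ, tp c0seq 1 t = t / 2 := by
    intro t
    simp [tp, c0seq, Finset.sum_range_succ, Finset.sum_range_one]
    ring
  have hrp1 : ∀ t : ℝ, rp c0seq 1 t = 1 := by
    intro t
    simp [rp, c0seq, Finset.sum_range_succ, Finset.sum_range_one]
  have hu : Tendsto (fun t : ℝ => t / 2) (𝓝[>] (0:ℝ)) (𝓝 0) := by
    have := tendsto_c_pow (1/2 : ℝ) 1 le_rfl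
    refine this.congr ?_
    intro t; ring
  have hO : (fun t : ℝ => t / 2 - 0) =O[𝓝[>] (0:ℝ)] fun t => t ^ (1:ℕ) := by
    refine ((isBigO_refl (fun t : ℝ => t ^ (1:ℕ)) _).const_mul_left (1/2)).congr' ?_ (by rfl)
    filter_upwards with t; simp; ring
  have hsum1 : ∀ t : ℝ, (∑ j ∈ Finset.range 2, -(j : ℝ) * (c0seq j).1 * t ^ (j + 1)) = 0 := by
    intro t
    simp [c0seq, Finset.sum_range_succ, Finset.sum_range_one]
  have hsum2 : ∀ t : ℝ, (∑ j ∈ Finset.range 2, -(j : ℝ) * (c0seq j).2 * t ^ (j + 1))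
      = -(1/2 : ℝ) * t ^ 2 := by
    intro t
    simp [c0seq, Finset.sum_range_succ, Finset.sum_range_one]
    try ring
  constructor
  · have hB := strict_pert (Real.hasStrictDerivAt_tan (x := 0) (by simp)) hu
      tendsto_const_nhds hO
    refine hB.congr' ?_ (by rfl)
    filter_upwards with t
    show Real.tan (t/2) - Real.tan 0 - 1 / Real.cos 0 ^ 2 * (t/2 - 0) = e1 c0seq 1 t
    simp only [e1, htp1, hrp1, hsum1]
    norm_num [Real.tan_zero, Real.cos_zero]
  · have hB := strict_pert hasStrictDerivAt_sec hu tendsto_const_nhds hO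
    have hB' := hB.const_mul_left ((n : ℝ) - 1)
    have hsmall := pow_succ_littleO 1 (-(1/2 : ℝ))
    have hcomb := hsmall.sub hB'
    refine hcomb.congr' ?_ (by rfl)
    filter_upwards with t
    show -(1/2 : ℝ) * t ^ (1+1) - ((n:ℝ) - 1) * ((Real.cos (t/2))⁻¹ - (Real.cos 0)⁻¹ - 0 * (t/2 - 0))
        = e2 n c0seq 1 t
    simp only [e2, htp1, hrp1, hsum2, one_div]
    norm_num [Real.cos_zero]

lemma step_exists {n : ℕ} (hn : 2 ≤ n) {c : ℕ → ℝ × ℝ} {k : ℕ} (h0 : c 0 = (1, 0))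
    (hck : Cond n c k) :
    ∃ v, Cond n (Function.update c (k + 1) v) (k + 1) := by
  have h02 : (c 0).2 = 0 := by rw [h0]
  have h01 : (c 0).1 = 1 := by rw [h0]
  have hn1 : ((n : ℝ) - 1) ≠ 0 := by
    have : (2 : ℝ) ≤ (n : ℝ) := by exact_mod_cast hn
    linarith
  obtain ⟨a1, ha1⟩ := exists_coeff (e1_analytic (c := c) (k := k) h02) k hck.1
  obtain ⟨a2, ha2⟩ := exists_coeff (e2_analytic (n := n) (c := c) (k := k) h02 h01) k hck.2
  set τ : ℝ := -a1 with hτ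
  set ρ : ℝ := a2 / ((n : ℝ) - 1) with hρdef
  have hρ : ((n : ℝ) - 1) * ρ = a2 := by rw [hρdef]; field_simp
  have hagree : ∀ j ≤ k, Function.update c (k + 1) (ρ, τ) j = c j := fun j hj =>
    Function.update_of_ne (by omega) _ _
  have hval : Function.update c (k + 1) (ρ, τ) (k + 1) = (ρ, τ) :=
    Function.update_self _ _ _
  have htp' : ∀ t : ℝ, tp (Function.update c (k + 1) (ρ, τ)) (k + 1) t
      = tp c k t + τ * t ^ (k + 1) := by
    intro t
    unfold tp
    rw [Finset.sum_range_succ]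
    congr 1
    · exact Finset.sum_congr rfl fun j hj => by
        rw [hagree j (Nat.lt_succ_iff.mp (Finset.mem_range.mp hj))]
    · rw [hval]
  have hrp' : ∀ t : ℝ, rp (Function.update c (k + 1) (ρ, τ)) (k + 1) t
      = rp c k t + ρ * t ^ (k + 1) := by
    intro t
    unfold rp
    rw [Finset.sum_range_succ]
    congr 1
    · exact Finset.sum_congr rfl fun j hj => by
        rw [hagree j (Nat.lt_succ_iff.mp (Finset.mem_range.mp hj))]
    · rw [hval]
  have htc : Tendsto (tp c k) (𝓝[>] (0:ℝ)) (𝓝 0) := by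
    have := tp_tendsto (c := c) (k := k); rwa [h02] at this
  have hrc : Tendsto (rp c k) (𝓝[>] (0:ℝ)) (𝓝 1) := by
    have := rp_tendsto (c := c) (k := k); rwa [h01] at this
  have hu : Tendsto (fun t : ℝ => tp c k t + τ * t ^ (k + 1)) (𝓝[>] (0:ℝ)) (𝓝 0) := by
    have := htc.add (tendsto_c_pow τ (k + 1) (by omega))
    simpa using this
  have hw : Tendsto (fun t : ℝ => rp c k t + ρ * t ^ (k + 1)) (𝓝[>] (0:ℝ)) (𝓝 1) := by
    have := hrc.add (tendsto_c_pow ρ (k + 1) (by omega))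
    simpa using this
  have hOτ : (fun t : ℝ => (tp c k t + τ * t ^ (k + 1)) - tp c k t)
      =O[𝓝[>] (0:ℝ)] fun t => t ^ (k + 1) := by
    refine ((isBigO_refl (fun t : ℝ => t ^ (k+1)) _).const_mul_left τ).congr' ?_ (by rfl)
    filter_upwards with t; ring
  have hOρ : (fun t : ℝ => (rp c k t + ρ * t ^ (k + 1)) - rp c k t)
      =O[𝓝[>] (0:ℝ)] fun t => t ^ (k + 1) := by
    refine ((isBigO_refl (fun t : ℝ => t ^ (k+1)) _).const_mul_left ρ).congr' ?_ (by rfl)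
    filter_upwards with t; ring
  have hd1' : ∀ t : ℝ, (∑ j ∈ Finset.range (k + 2),
        -(j : ℝ) * ((Function.update c (k + 1) (ρ, τ)) j).1 * t ^ (j + 1))
      = (∑ j ∈ Finset.range (k + 1), -(j : ℝ) * (c j).1 * t ^ (j + 1))
        + (-((k : ℝ) + 1)) * ρ * t ^ (k + 2) := by
    intro t
    rw [Finset.sum_range_succ]
    congr 1
    · exact Finset.sum_congr rfl fun j hj => by
        rw [hagree j (Nat.lt_succ_iff.mp (Finset.mem_range.mp hj))]
    · rw [hval]; push_cast; ring
  have hd2' : ∀ t : ℝ, (∑ j ∈ Finset.range (k + 2),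
        -(j : ℝ) * ((Function.update c (k + 1) (ρ, τ)) j).2 * t ^ (j + 1))
      = (∑ j ∈ Finset.range (k + 1), -(j : ℝ) * (c j).2 * t ^ (j + 1))
        + (-((k : ℝ) + 1)) * τ * t ^ (k + 2) := by
    intro t
    rw [Finset.sum_range_succ]
    congr 1
    · exact Finset.sum_congr rfl fun j hj => by
        rw [hagree j (Nat.lt_succ_iff.mp (Finset.mem_range.mp hj))]
    · rw [hval]; push_cast; ring
  refine ⟨(ρ, τ), ?_, ?_⟩
  · -- first equation
    have hBtan := strict_pert (Real.hasStrictDerivAt_tan (x := 0) (by simp)) hu htc hOτ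
    have hsmall1 := pow_succ_littleO (k + 1) (-((k : ℝ) + 1) * ρ)
    have hsmall2 := pow_succ_littleO (k + 1) (ρ / 2)
    have hcomb := ((ha1.add hBtan).add hsmall1).sub hsmall2
    refine hcomb.congr' ?_ (by rfl)
    filter_upwards with t
    show (e1 c k t - a1 * t ^ (k+1))
        + (Real.tan (tp c k t + τ * t ^ (k + 1)) - Real.tan (tp c k t)
            - 1 / Real.cos 0 ^ 2 * ((tp c k t + τ * t ^ (k + 1)) - tp c k t))
        + (-((k : ℝ) + 1) * ρ) * t ^ (k + 1 + 1) - (ρ / 2) * t ^ (k + 1 + 1)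
        = e1 (Function.update c (k + 1) (ρ, τ)) (k + 1) t
    simp only [e1]
    rw [hd1' t, htp' t, hrp' t, Real.cos_zero]
    have hpow : t ^ (k + 1 + 1) = t ^ (k + 2) := by ring_nf
    rw [hpow]
    have hτ' : τ = -a1 := hτ
    norm_num
    linear_combination (-(1:ℝ)) * t ^ (k+1) * hτ'
  · -- second equation
    have hBsec := strict_pert hasStrictDerivAt_sec hu htc hOτ
    have hBinv := strict_pert (hasStrictDerivAt_inv (one_ne_zero (α := ℝ))) hw hrc hOρ
    have hsmall := pow_succ_littleO (k + 1) (-((k : ℝ) + 1) * τ)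
    have hcomb := ((ha2.add hsmall).sub (hBsec.const_mul_left ((n : ℝ) - 1))).add
      (hBinv.const_mul_left ((n : ℝ) - 1))
    refine hcomb.congr' ?_ (by rfl)
    filter_upwards with t
    show (e2 n c k t - a2 * t ^ (k+1)) + (-((k : ℝ) + 1) * τ) * t ^ (k + 1 + 1)
        - ((n : ℝ) - 1) * ((Real.cos (tp c k t + τ * t ^ (k + 1)))⁻¹ - (Real.cos (tp c k t))⁻¹
            - 0 * ((tp c k t + τ * t ^ (k + 1)) - tp c k t))
        + ((n : ℝ) - 1) * ((rp c k t + ρ * t ^ (k + 1))⁻¹ - (rp c k t)⁻¹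
            - -(1^2 : ℝ)⁻¹ * ((rp c k t + ρ * t ^ (k + 1)) - rp c k t))
        = e2 n (Function.update c (k + 1) (ρ, τ)) (k + 1) t
    simp only [e2, one_div]
    rw [hd2' t, htp' t, hrp' t]
    have hpow : t ^ (k + 1 + 1) = t ^ (k + 2) := by ring_nf
    rw [hpow]
    norm_num
    linear_combination t ^ (k+1) * hρ

end FS
namespace FS

lemma exists_upto (n : ℕ) (hn : 2 ≤ n) :
    ∀ K, ∃ c : ℕ → ℝ × ℝ, c 0 = (1, 0) ∧ c 1 = (0, 1/2) ∧ ∀ m ≤ K, Cond n c m := by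
  intro K
  induction K with
  | zero =>
    refine ⟨c0seq, c0seq_0, c0seq_1, ?_⟩
    intro m hm
    interval_cases m
    exact cond0 n
  | succ K ih =>
    rcases Nat.eq_zero_or_pos K with rfl | hK
    · refine ⟨c0seq, c0seq_0, c0seq_1, ?_⟩
      intro m hm
      interval_cases m
      · exact cond0 n
      · exact cond1 n
    · obtain ⟨c, hc0, hc1, hcm⟩ := ih
      obtain ⟨v, hv⟩ := step_exists hn hc0 (hcm K le_rfl)
      refine ⟨Function.update c (K + 1) v, ?_, ?_, ?_⟩
      · rw [Function.update_of_ne (by omega)]; exact hc0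
      · rw [Function.update_of_ne (by omega)]; exact hc1
      · intro m hm
        rcases Nat.lt_or_ge m (K + 1) with h | h
        · exact cond_congr (fun j hj => (Function.update_of_ne (by omega) _ _).symm)
            (hcm m (by omega))
        · have : m = K + 1 := by omega
          subst this
          exact hv

lemma agree_upto (n : ℕ) (hn : 2 ≤ n) {c c' : ℕ → ℝ × ℝ}
    (h0 : c 0 = (1, 0)) (h1 : c 1 = (0, 1/2))
    (h0' : c' 0 = (1, 0)) (h1' : c' 1 = (0, 1/2)) {K : ℕ}
    (hc : ∀ m ≤ K, Cond n c m) (hc' : ∀ m ≤ K, Cond n c' m) :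
    ∀ j ≤ K, c j = c' j := by
  intro j
  induction j using Nat.strong_induction_on with
  | _ j IH =>
    intro hj
    rcases Nat.eq_zero_or_pos j with rfl | hjpos
    · rw [h0, h0']
    · exact step_unique hn hjpos h0
        (fun i hi => IH i hi (le_trans (le_of_lt hi) hj))
        (hc j hj) (hc' j hj)

end FS


theorem exists_unique_formal_solution (n : ℕ) (hn : 2 ≤ n) :
    ∃! c : ℕ → ℝ × ℝ,
      c 0 = (1, 0) ∧ c 1 = (0, 1 / 2) ∧ IsFormalSolution n c := by
  classical
  have E := FS.exists_upto n hn
  set cf : ℕ → ℝ × ℝ := fun k => (Classical.choose (E k)) k with hcf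
  have spec : ∀ K, (Classical.choose (E K)) 0 = (1, 0) ∧ (Classical.choose (E K)) 1 = (0, 1/2)
      ∧ ∀ m ≤ K, FS.Cond n (Classical.choose (E K)) m := fun K => Classical.choose_spec (E K)
  have hdiag : ∀ K j, j ≤ K → cf j = (Classical.choose (E K)) j := by
    intro K j hj
    rw [hcf]
    exact FS.agree_upto n hn (spec j).1 (spec j).2.1 (spec K).1 (spec K).2.1
      (fun m hm => (spec j).2.2 m hm) (fun m hm => (spec K).2.2 m (le_trans hm hj)) j le_rfl
  have hcf0 : cf 0 = (1, 0) := by rw [hcf]; exact (spec 0).1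
  have hcf1 : cf 1 = (0, 1/2) := by rw [hcf]; exact (spec 1).2.1
  have hcfSol : IsFormalSolution n cf := by
    rw [FS.isFormalSolution_iff]
    intro k
    exact FS.cond_congr (fun j hj => ((hdiag k j hj)).symm) ((spec k).2.2 k le_rfl)
  refine ⟨cf, ⟨hcf0, hcf1, hcfSol⟩, ?_⟩
  rintro c' ⟨h0', h1', hsol'⟩
  funext j
  have hc' := (FS.isFormalSolution_iff n c').mp hsol'
  have hc := (FS.isFormalSolution_iff n cf).mp hcfSol
  exact FS.agree_upto n hn h0' h1' hcf0 hcf1 (K := j)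
    (fun m _ => hc' m) (fun m _ => hc m) j le_rfl
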